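/- For every t ∈ P there is no infinite chain t = s⁰ → s¹ → s² → ⋯ under the O'Hara step relation; consequently every rewrite sequence from t is finite and extends to a maximal rewrite sequence ending at a normal form. -/

import Mathlib

open scoped BigOperators

/-- One step `s → s'` of the continuous O'Hara algorithm on `ℝ^m`:
for some index `j` with `s_j ≥ b_j`, subtract `b_j` from the `j`-th
coordinate and add `a_{j-1}` to the `(j-1)`-st coordinate
(indices cyclically modulo `m`). -/
def CStep (m : ℕ) [NeZero m] (a b : Fin m → ℝ) (s s' : Fin m → ℝ) : Prop :=
  ∃ j : Fin m, b j ≤ s j ∧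
    ∀ l, s' l = s l + (if l = j - 1 then a (j - 1) else 0)
                    - (if l = j then b j else 0)

/-- Membership in the half-open box `[0,a_1) × ⋯ × [0,a_m)`. -/
def InBox {m : ℕ} (a : Fin m → ℝ) (t : Fin m → ℝ) : Prop :=
  ∀ j, 0 ≤ t j ∧ t j < a j


private lemma floor_eq_abs_sub_lt {x y : ℝ} (h : ⌊x⌋ = ⌊y⌋) : |x - y| < 1 := by
  have h' : ((⌊x⌋ : ℤ) : ℝ) = ((⌊y⌋ : ℤ) : ℝ) := by exact_mod_cast h
  have hx1 := Int.floor_le x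
  have hx2 := Int.lt_floor_add_one x
  have hy1 := Int.floor_le y
  have hy2 := Int.lt_floor_add_one y
  rw [abs_sub_lt_iff]
  constructor <;> linarith

private lemma dirichlet_simul {m : ℕ} [NeZero m] (α : Fin m → ℝ) {ε : ℝ} (hε : 0 < ε) :
    ∃ (k : ℕ) (p : Fin m → ℤ), 1 ≤ k ∧ ∀ j, |(k : ℝ) * α j - (p j : ℝ)| < ε := by
  classical
  obtain ⟨N, hN⟩ := exists_nat_gt (1 / ε)
  have hN0 : 0 < N := by
    have : (0:ℝ) < 1/ε := by positivity
    exact_mod_cast this.trans hN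
  have hNR : (0:ℝ) < (N:ℝ) := by exact_mod_cast hN0
  -- the pigeonhole map
  have hGlt : ∀ (r : ℕ) (j : Fin m), (⌊(N:ℝ) * Int.fract ((r:ℝ) * α j)⌋).toNat < N := by
    intro r j
    have h1 : (0:ℝ) ≤ (N:ℝ) * Int.fract ((r:ℝ) * α j) :=
      mul_nonneg (le_of_lt hNR) (Int.fract_nonneg _)
    have h2 : (N:ℝ) * Int.fract ((r:ℝ) * α j) < N := by
      have := Int.fract_lt_one ((r:ℝ) * α j)
      nlinarith
    have h3 : ⌊(N:ℝ) * Int.fract ((r:ℝ) * α j)⌋ < (N:ℤ) := by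
      rw [Int.floor_lt]; exact_mod_cast h2
    have h4 : 0 ≤ ⌊(N:ℝ) * Int.fract ((r:ℝ) * α j)⌋ := Int.floor_nonneg.2 h1
    omega
  set G : ℕ → (Fin m → Fin N) := fun r j => ⟨(⌊(N:ℝ) * Int.fract ((r:ℝ) * α j)⌋).toNat, hGlt r j⟩ with hG
  have hcard : (Finset.univ : Finset (Fin m → Fin N)).card < (Finset.range (N ^ m + 1)).card := by
    rw [Finset.card_univ, Finset.card_range, Fintype.card_fun]
    simp
  obtain ⟨r1, -, r2, -, hne, heq⟩ :=
    Finset.exists_ne_map_eq_of_card_lt_of_maps_to hcard (f := G)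
      (fun x _ => Finset.mem_univ (G x))
  -- wlog r1 < r2
  have main : ∀ (s1 s2 : ℕ), s1 < s2 → G s1 = G s2 →
      ∃ (k : ℕ) (p : Fin m → ℤ), 1 ≤ k ∧ ∀ j, |(k : ℝ) * α j - (p j : ℝ)| < ε := by
    intro s1 s2 hlt hGeq
    refine ⟨s2 - s1, fun j => ⌊(s2:ℝ) * α j⌋ - ⌊(s1:ℝ) * α j⌋, by omega, ?_⟩
    intro j
    have hfl : ⌊(N:ℝ) * Int.fract ((s1:ℝ) * α j)⌋ = ⌊(N:ℝ) * Int.fract ((s2:ℝ) * α j)⌋ := by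
      have h := congrFun hGeq j
      simp only [hG, Fin.mk.injEq] at h
      have n1 : 0 ≤ ⌊(N:ℝ) * Int.fract ((s1:ℝ) * α j)⌋ :=
        Int.floor_nonneg.2 (mul_nonneg (le_of_lt hNR) (Int.fract_nonneg _))
      have n2 : 0 ≤ ⌊(N:ℝ) * Int.fract ((s2:ℝ) * α j)⌋ :=
        Int.floor_nonneg.2 (mul_nonneg (le_of_lt hNR) (Int.fract_nonneg _))
      omega
    have habs : |(N:ℝ) * Int.fract ((s1:ℝ) * α j) - (N:ℝ) * Int.fract ((s2:ℝ) * α j)| < 1 :=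
      floor_eq_abs_sub_lt hfl
    have habs2 : |Int.fract ((s1:ℝ) * α j) - Int.fract ((s2:ℝ) * α j)| < 1 / N := by
      rw [← mul_sub, abs_mul, abs_of_pos hNR] at habs
      rw [lt_div_iff₀ hNR]
      linarith
    have hcast : ((s2 - s1 : ℕ) : ℝ) = (s2:ℝ) - (s1:ℝ) := by
      have := Nat.cast_sub (le_of_lt hlt) (R := ℝ)
      exact this
    have hexp : ((s2 - s1 : ℕ) : ℝ) * α j - ((⌊(s2:ℝ) * α j⌋ - ⌊(s1:ℝ) * α j⌋ : ℤ) : ℝ)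
        = Int.fract ((s2:ℝ) * α j) - Int.fract ((s1:ℝ) * α j) := by
      rw [hcast]
      unfold Int.fract
      push_cast
      ring
    rw [hexp]
    rw [abs_sub_comm] at habs2
    have h1N : 1 / (N:ℝ) < ε := by
      rw [div_lt_iff₀ hNR]
      rw [div_lt_iff₀ hε] at hN
      linarith
    linarith
  rcases lt_or_gt_of_ne hne with h | h
  · exact main r1 r2 h heq
  · exact main r2 r1 h heq.symm

private lemma exists_nu {m : ℕ} [NeZero m] (i a b t : Fin m → ℝ)
    (hi : ∀ j, 0 < i j) (ha : ∀ j, 0 < a j) (hb : ∀ j, 0 < b j)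
    (hiab : ∀ j, i j * a j = i (j + 1) * b (j + 1))
    (ht : ∀ j, t j < a j) :
    ∃ ν : Fin m → ℕ, ∀ j, t j + a j * (ν (j+1) : ℝ) - b j * (ν j : ℝ) < b j := by
  classical
  set Q : Fin m → ℝ := fun j => i j * b j with hQdef
  have hQ : ∀ j, 0 < Q j := fun j => mul_pos (hi j) (hb j)
  set ζ : Fin m → ℝ := fun j => i j * a j - i j * t j with hζdef
  have hζ : ∀ j, 0 < ζ j := fun j => by
    have := mul_lt_mul_of_pos_left (ht j) (hi j)
    simp only [hζdef]; linarith
  obtain ⟨j1, -, hj1⟩ := Finset.exists_min_image Finset.univ ζ ⟨0, Finset.mem_univ 0⟩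
  obtain ⟨j2, -, hj2⟩ := Finset.exists_max_image Finset.univ Q ⟨0, Finset.mem_univ 0⟩
  set η : ℝ := min (ζ j1) (Q 0) / 2 with hηdef
  have hη : 0 < η := by
    have h : 0 < min (ζ j1) (Q 0) := lt_min (hζ j1) (hQ 0)
    simp only [hηdef]; linarith
  have hη2 : 2 * η = min (ζ j1) (Q 0) := by rw [hηdef]; ring
  have hηζ : ∀ j, 2 * η ≤ ζ j := by
    intro j
    have h1 : min (ζ j1) (Q 0) ≤ ζ j1 := min_le_left _ _
    have h2 := hj1 j (Finset.mem_univ j)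
    linarith
  have hηQ : η < Q 0 := by
    have h1 : min (ζ j1) (Q 0) ≤ Q 0 := min_le_right _ _
    have := hQ 0
    linarith
  have hε : 0 < η / Q j2 := div_pos hη (hQ j2)
  obtain ⟨k, p, hk1, hp⟩ := dirichlet_simul (fun j => Q 0 / Q j) hε
  -- each Q j * p j is within η of T := k * Q 0
  have hT : ∀ j, |Q j * (p j : ℝ) - (k:ℝ) * Q 0| < η := by
    intro j
    have h0 := hp j
    have hQj := hQ j
    have hQjne : Q j ≠ 0 := ne_of_gt hQj
    have hrw : Q j * (p j : ℝ) - (k:ℝ) * Q 0 = -(Q j * ((k:ℝ) * (Q 0 / Q j) - (p j : ℝ))) := by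
      field_simp
      try ring
    rw [hrw, abs_neg, abs_mul, abs_of_pos hQj]
    have hle : Q j * |(k:ℝ) * (Q 0 / Q j) - (p j : ℝ)| < Q j * (η / Q j2) :=
      mul_lt_mul_of_pos_left h0 hQj
    have e1 : Q j * (η / Q j2) ≤ Q j2 * (η / Q j2) :=
      mul_le_mul_of_nonneg_right (hj2 j (Finset.mem_univ j)) (le_of_lt hε)
    have e2 : Q j2 * (η / Q j2) = η := by
      rw [mul_comm]; exact div_mul_cancel₀ η (ne_of_gt (hQ j2))
    linarith
  -- p j ≥ 1
  have hp1 : ∀ j, 1 ≤ p j := by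
    intro j
    have h1 := (abs_lt.1 (hT j)).1
    have hk : (1:ℝ) ≤ (k:ℝ) := by exact_mod_cast hk1
    have h2 : Q 0 ≤ (k:ℝ) * Q 0 := by nlinarith [hQ 0]
    have h3 : 0 < Q j * (p j : ℝ) := by linarith
    have h4 : 0 < (p j : ℝ) := by
      by_contra hcon
      push_neg at hcon
      nlinarith [hQ j]
    have : (0:ℤ) < p j := by exact_mod_cast h4
    omega
  refine ⟨fun j => (p j - 1).toNat, ?_⟩
  intro j
  have hcast : ∀ l, (((p l - 1).toNat : ℕ) : ℝ) = (p l : ℝ) - 1 := by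
    intro l
    have h1 : (0:ℤ) ≤ p l - 1 := by have := hp1 l; omega
    rw [show ((p l:ℝ) - 1) = (((p l - 1 : ℤ)):ℝ) by push_cast; ring]
    exact_mod_cast congrArg (Int.cast : ℤ → ℝ) (Int.toNat_of_nonneg h1)
  rw [hcast (j+1), hcast j]
  have e : i j * a j = Q (j + 1) := by rw [hiab j]
  have eζ : i j * t j = Q (j + 1) - ζ j := by
    simp only [hζdef]
    rw [← e]; ring
  have hA := abs_lt.1 (hT (j+1))
  have hB := abs_lt.1 (hT j)
  have hz := hηζ j
  have hmul : i j * (t j + a j * ((p (j+1):ℝ)-1) - b j * ((p j:ℝ)-1)) < i j * b j := by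
    have expand : i j * (t j + a j * ((p (j+1):ℝ)-1) - b j * ((p j:ℝ)-1))
        = i j * t j + (i j * a j) * ((p (j+1):ℝ)-1) - Q j * ((p j:ℝ)-1) := by
      simp only [hQdef]; ring
    have hQjeq : i j * b j = Q j := by simp only [hQdef]
    rw [expand, e, eζ, hQjeq]
    linarith
  exact lt_of_mul_lt_mul_left hmul (le_of_lt (hi j))

private lemma core_bound {m : ℕ} [NeZero m] (a b : Fin m → ℝ) (ha : ∀ j, 0 < a j)
    (t : Fin m → ℝ) (ν : Fin m → ℕ)
    (key : ∀ j, t j + a j * (ν (j+1) : ℝ) - b j * (ν j : ℝ) < b j)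
    (N : ℕ) (f : ℕ → Fin m → ℝ) (hf0 : f 0 = t)
    (hstep : ∀ k, k < N → CStep m a b (f k) (f (k+1))) :
    N ≤ ∑ j, ν j := by
  classical
  have hex : ∀ k, ∃ j : Fin m, k < N →
      (b j ≤ f k j ∧ ∀ l, f (k+1) l
        = f k l + (if l = j - 1 then a (j - 1) else 0) - (if l = j then b j else 0)) := by
    intro k
    by_cases h : k < N
    · obtain ⟨j, hj⟩ := hstep k h
      exact ⟨j, fun _ => hj⟩
    · exact ⟨0, fun h' => absurd h' h⟩
  choose J hJ using hex
  set n : ℕ → Fin m → ℕ := fun k j => ((Finset.range k).filter (fun r => J r = j)).card with hn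
  have hnsucc : ∀ k j, n (k+1) j = n k j + (if J k = j then 1 else 0) := by
    intro k j
    simp only [hn, Finset.range_add_one, Finset.filter_insert]
    by_cases h : J k = j
    · rw [if_pos h, if_pos h, Finset.card_insert_of_notMem (by simp)]
    · rw [if_neg h, if_neg h, add_zero]
  have hform : ∀ k, k ≤ N → ∀ l, f k l = t l + a l * (n k (l+1) : ℝ) - b l * (n k l : ℝ) := by
    intro k
    induction k with
    | zero =>
      intro _ l
      simp [hf0, hn]
    | succ k ih =>
      intro hk l
      have hk' : k < N := by omega
      have hrec := (hJ k hk').2 l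
      have h1 : (l = J k - 1) ↔ (l + 1 = J k) := eq_sub_iff_add_eq
      have e1 : (if l = J k - 1 then a (J k - 1) else 0)
          = a l * (if J k = l + 1 then (1:ℝ) else 0) := by
        by_cases hc : J k = l + 1
        · have h2 : J k - 1 = l := by rw [hc]; exact add_sub_cancel_right l 1
          rw [if_pos (h1.2 hc.symm), if_pos hc, h2, mul_one]
        · rw [if_neg (fun hcc => hc (h1.1 hcc).symm), if_neg hc, mul_zero]
      have e2 : (if l = J k then b (J k) else 0)
          = b l * (if J k = l then (1:ℝ) else 0) := by
        by_cases hc : J k = l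
        · rw [if_pos hc.symm, if_pos hc, hc, mul_one]
        · rw [if_neg (fun hcc => hc hcc.symm), if_neg hc, mul_zero]
      rw [hrec, ih (le_of_lt hk') l, e1, e2, hnsucc, hnsucc]
      push_cast
      by_cases hc1 : J k = l + 1 <;> by_cases hc2 : J k = l <;>
        simp only [if_pos, if_neg, hc1, hc2, if_true, if_false, ite_true, ite_false] <;> ring
  have hbd : ∀ k, k ≤ N → ∀ j, n k j ≤ ν j := by
    intro k
    induction k with
    | zero => intro _ j; simp [hn]
    | succ k ih =>
      intro hk j
      have hk' : k < N := by omega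
      rw [hnsucc]
      by_cases h : J k = j
      · rw [if_pos h]
        by_contra hcon
        have hnk : n k j = ν j := by
          have := ih (le_of_lt hk') j
          omega
        have hfire : b j ≤ f k j := h ▸ (hJ k hk').1
        rw [hform k (le_of_lt hk') j, hnk] at hfire
        have hmono : a j * ((n k (j+1) : ℕ) : ℝ) ≤ a j * ((ν (j+1) : ℕ) : ℝ) := by
          apply mul_le_mul_of_nonneg_left _ (le_of_lt (ha j))
          exact_mod_cast ih (le_of_lt hk') (j+1)
        have hkey := key j
        linarith
      · rw [if_neg h, add_zero]
        exact ih (le_of_lt hk') j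
  have hcount : N = ∑ j, n N j := by
    have h := Finset.card_eq_sum_card_fiberwise
      (f := J) (s := Finset.range N) (t := Finset.univ) (fun x _ => Finset.mem_univ _)
    simpa [hn] using h
  rw [hcount]
  exact Finset.sum_le_sum (fun j _ => hbd N le_rfl j)


private lemma rtg_chain {α : Type*} {R : α → α → Prop} {x y : α}
    (h : Relation.ReflTransGen R x y) :
    ∃ (N : ℕ) (f : ℕ → α), f 0 = x ∧ f N = y ∧ ∀ k, k < N → R (f k) (f (k+1)) := by
  induction h with
  | refl => exact ⟨0, fun _ => x, rfl, rfl, fun k hk => absurd hk (Nat.not_lt_zero k)⟩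
  | @tail c d hxc hcd ih =>
    obtain ⟨N, f, h0, hN, hs⟩ := ih
    refine ⟨N + 1, fun k => if k ≤ N then f k else d, ?_, ?_, ?_⟩
    · show (if 0 ≤ N then f 0 else d) = x
      rw [if_pos (Nat.zero_le N)]; exact h0
    · show (if N + 1 ≤ N then f (N+1) else d) = d
      rw [if_neg (by omega)]
    · intro k hk
      show R (if k ≤ N then f k else d) (if k + 1 ≤ N then f (k+1) else d)
      rcases Nat.lt_or_ge k N with h | h
      · rw [if_pos (by omega), if_pos (by omega)]
        exact hs k h
      · have hkN : k = N := by omega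
        subst hkN
        rw [if_pos le_rfl, if_neg (by omega), hN]
        exact hcd


/-- for every `t ∈ P` there is no infinite chain under the
O'Hara step relation; consequently every rewrite sequence from `t` extends
to a maximal one ending at a normal form (`s_j < b_j` for all `j`). -/
theorem ohara_termination {m : ℕ} [NeZero m] (i a b : Fin m → ℝ)
    (hi : ∀ j, 0 < i j) (ha : ∀ j, 0 < a j) (hb : ∀ j, 0 < b j)
    (hiab : ∀ j, i j * a j = i (j + 1) * b (j + 1))
    (t : Fin m → ℝ) (ht : InBox a t) :
    (¬ ∃ f : ℕ → Fin m → ℝ, f 0 = t ∧ ∀ k, CStep m a b (f k) (f (k + 1))) ∧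
    (∀ u : Fin m → ℝ, Relation.ReflTransGen (CStep m a b) t u →
      ∃ w : Fin m → ℝ, Relation.ReflTransGen (CStep m a b) u w ∧
        ∀ j, w j < b j) := by
  classical
  obtain ⟨ν, key⟩ := exists_nu i a b t hi ha hb hiab (fun j => (ht j).2)
  set B := ∑ j, ν j with hB
  have core : ∀ (N : ℕ) (f : ℕ → Fin m → ℝ), f 0 = t →
      (∀ k, k < N → CStep m a b (f k) (f (k+1))) → N ≤ B :=
    fun N f h0 hs => core_bound a b ha t ν key N f h0 hs
  constructor
  · rintro ⟨f, hf0, hf⟩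
    have := core (B + 1) f hf0 (fun k _ => hf k)
    omega
  · intro u hu
    obtain ⟨N, f, hf0, hfN, hfs⟩ := rtg_chain hu
    have main : ∀ (r : ℕ) (N : ℕ) (f : ℕ → Fin m → ℝ) (u : Fin m → ℝ),
        f 0 = t → f N = u → (∀ k, k < N → CStep m a b (f k) (f (k+1))) → B + 1 ≤ N + r →
        ∃ w, Relation.ReflTransGen (CStep m a b) u w ∧ ∀ j, w j < b j := by
      intro r
      induction r with
      | zero =>
        intro N f u h0 hN hs hr
        exact absurd (core N f h0 hs) (by omega)
      | succ r ih =>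
        intro N f u h0 hN hs hr
        by_cases hnf : ∀ j, u j < b j
        · exact ⟨u, Relation.ReflTransGen.refl, hnf⟩
        · push_neg at hnf
          obtain ⟨j, hj⟩ := hnf
          set u' : Fin m → ℝ := fun l =>
            u l + (if l = j - 1 then a (j - 1) else 0) - (if l = j then b j else 0) with hu'
          have hstep : CStep m a b u u' := ⟨j, hj, fun l => rfl⟩
          have h0' : (fun k => if k ≤ N then f k else u') 0 = t := by
            show (if 0 ≤ N then f 0 else u') = t
            rw [if_pos (Nat.zero_le N)]; exact h0
          have hN' : (fun k => if k ≤ N then f k else u') (N + 1) = u' := by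
            show (if N + 1 ≤ N then f (N+1) else u') = u'
            rw [if_neg (by omega)]
          have hs' : ∀ k, k < N + 1 →
              CStep m a b ((fun k => if k ≤ N then f k else u') k)
                ((fun k => if k ≤ N then f k else u') (k+1)) := by
            intro k hk
            show CStep m a b (if k ≤ N then f k else u') (if k + 1 ≤ N then f (k+1) else u')
            rcases Nat.lt_or_ge k N with h | h
            · rw [if_pos (by omega), if_pos (by omega)]
              exact hs k h
            · have hkN : k = N := by omega
              subst hkN
              rw [if_pos le_rfl, if_neg (by omega), hN]
              exact hstep
          obtain ⟨w, hw1, hw2⟩ := ih (N+1) (fun k => if k ≤ N then f k else u') u' h0' hN' hs' (by omega)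
          exact ⟨w, Relation.ReflTransGen.head hstep hw1, hw2⟩
    exact main (B + 1) N f u hf0 hfN hfs (by omega)
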